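/- Equivalence classes of probabilities of causation, Case 1 (padding the outcome variable): fix integers 1 ≤ k ≤ m < n and data arrays e, o : {1,…,n} × {1,…,m} → ℝ. Let S_m be the set of real numbers of the form P(⋂_{j=1}^{k} {Y_j = j}) where the counterfactual model ranges over all probability spaces (Ω, 𝒜, P) with a measurable treatment X : Ω → {1,…,n} and measurable potential outcomes Y_j : Ω → {1,…,m} (j ∈ {1,…,n}), observed outcome Y(ω) = Y_{X(ω)}(ω), satisfying P(Y_j = i) = e(j,i) and P(X = j, Y = i) = o(j,i) for all j ∈ {1,…,n} and i ∈ {1,…,m}. Let S_n be the analogously defined set for models whose potential outcomes take values in {1,…,n}, subject to the additional constraints P(Y'_j = l) = 0 and P(X = j, Y' = l) = 0 for all j ∈ {1,…,n} and all l ∈ {m+1,…,n}, together with P(Y'_j = i) = e(j,i) and P(X = j, Y' = i) = o(j,i) for i ∈ {1,…,m}. Then S_n = S_m; consequently the tight bounds on P(⋂_{j=1}^{k} {Y'_j = j}) computed from the padded data coincide with those on P(⋂_{j=1}^{k} {Y_j = j}) computed from the original data. -/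
import Mathlib


open MeasureTheory

lemma meas_eq_of_null {Ω : Type} [MeasurableSpace Ω] (P : Measure Ω)
    {N : Set Ω} (hN : P N = 0) {s t : Set Ω}
    (h : ∀ ω ∉ N, (ω ∈ s ↔ ω ∈ t)) : P s = P t := by
  apply measure_congr
  have hae : ∀ᵐ ω ∂P, ω ∉ N := by
    rw [ae_iff]
    simpa [not_not] using hN
  filter_upwards [hae] with ω hω
  exact eq_iff_iff.mpr (h ω hω)

theorem equivalence_class_outcome_padding
    (n m k : ℕ) (hk1 : 1 ≤ k) (hkm : k ≤ m) (hmn : m < n)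
    (e o : ℕ → ℕ → ℝ) :
    {r : ℝ | ∃ (Ω : Type) (_ : MeasurableSpace Ω) (P : Measure Ω)
        (_ : IsProbabilityMeasure P) (X : Ω → ℕ) (Y : ℕ → Ω → ℕ),
      Measurable X ∧ (∀ j, Measurable (Y j)) ∧
      (∀ ω, X ω ∈ Finset.Icc 1 n) ∧
      (∀ j ω, Y j ω ∈ Finset.Icc 1 n) ∧
      (∀ j ∈ Finset.Icc 1 n, ∀ i ∈ Finset.Icc 1 m,
        (P {ω | Y j ω = i}).toReal = e j i) ∧
      (∀ j ∈ Finset.Icc 1 n, ∀ i ∈ Finset.Icc 1 m,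
        (P {ω | X ω = j ∧ Y (X ω) ω = i}).toReal = o j i) ∧
      (∀ j ∈ Finset.Icc 1 n, ∀ l ∈ Finset.Icc (m+1) n,
        (P {ω | Y j ω = l}).toReal = 0) ∧
      (∀ j ∈ Finset.Icc 1 n, ∀ l ∈ Finset.Icc (m+1) n,
        (P {ω | X ω = j ∧ Y (X ω) ω = l}).toReal = 0) ∧
      r = (P (⋂ j ∈ Finset.Icc 1 k, {ω | Y j ω = j})).toReal} =
    {r : ℝ | ∃ (Ω : Type) (_ : MeasurableSpace Ω) (P : Measure Ω)
        (_ : IsProbabilityMeasure P) (X : Ω → ℕ) (Y : ℕ → Ω → ℕ),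
      Measurable X ∧ (∀ j, Measurable (Y j)) ∧
      (∀ ω, X ω ∈ Finset.Icc 1 n) ∧
      (∀ j ω, Y j ω ∈ Finset.Icc 1 m) ∧
      (∀ j ∈ Finset.Icc 1 n, ∀ i ∈ Finset.Icc 1 m,
        (P {ω | Y j ω = i}).toReal = e j i) ∧
      (∀ j ∈ Finset.Icc 1 n, ∀ i ∈ Finset.Icc 1 m,
        (P {ω | X ω = j ∧ Y (X ω) ω = i}).toReal = o j i) ∧
      r = (P (⋂ j ∈ Finset.Icc 1 k, {ω | Y j ω = j})).toReal} := by
  ext r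
  simp only [Set.mem_setOf_eq]
  constructor
  · rintro ⟨Ω, inst, P, hP, X, Y, hX, hY, hXr, hYr, he, ho, hz, _hzj, hr⟩
    set N : Set Ω := ⋃ j ∈ Finset.Icc 1 n, {ω | m < Y j ω} with hNdef
    have hnull : ∀ j ∈ Finset.Icc 1 n, ∀ l ∈ Finset.Icc (m+1) n,
        P {ω | Y j ω = l} = 0 := by
      intro j hj l hl
      have := hz j hj l hl
      rwa [ENNReal.toReal_eq_zero_iff, or_iff_left (measure_ne_top P _)] at this
    have hN : P N = 0 := by
      refine measure_iUnion_null fun j => measure_iUnion_null fun hj => ?_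
      have hsub : {ω | m < Y j ω} ⊆ ⋃ l ∈ Finset.Icc (m+1) n, {ω | Y j ω = l} := by
        intro ω hω
        refine Set.mem_biUnion ?_ rfl
        have := hYr j ω
        simp only [Finset.mem_Icc] at this
        simp only [Set.mem_setOf_eq] at hω
        exact Finset.mem_coe.mpr (Finset.mem_Icc.mpr (by omega))
      refine measure_mono_null hsub ?_
      exact measure_iUnion_null fun l => measure_iUnion_null fun hl => hnull j hj l hl
    have hout : ∀ ω, ω ∉ N → ∀ j ∈ Finset.Icc 1 n, Y j ω ≤ m := by
      intro ω hω j hj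
      by_contra hc
      exact hω (Set.mem_biUnion hj (by simpa using Nat.lt_of_not_le hc))
    refine ⟨Ω, inst, P, hP, X, fun j ω => if Y j ω ≤ m then Y j ω else 1,
      hX, ?_, hXr, ?_, ?_, ?_, ?_⟩
    · intro j
      have hms : MeasurableSet (Y j ⁻¹' {x | x ≤ m}) := hY j trivial
      exact Measurable.ite hms (hY j) measurable_const
    · intro j ω
      show (if Y j ω ≤ m then Y j ω else 1) ∈ Finset.Icc 1 m
      by_cases h : Y j ω ≤ m
      · simp only [if_pos h]
        have := Finset.mem_Icc.mp (hYr j ω)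
        exact Finset.mem_Icc.mpr ⟨this.1, h⟩
      · simp only [if_neg h]
        exact Finset.mem_Icc.mpr ⟨le_refl 1, le_trans hk1 hkm⟩
    · intro j hj i hi
      rw [← he j hj i hi]
      congr 1
      refine meas_eq_of_null P hN ?_
      intro ω hω
      simp only [Set.mem_setOf_eq, if_pos (hout ω hω j hj)]
    · intro j hj i hi
      rw [← ho j hj i hi]
      congr 1
      refine meas_eq_of_null P hN ?_
      intro ω hω
      simp only [Set.mem_setOf_eq, if_pos (hout ω hω (X ω) (hXr ω))]
    · rw [hr]
      congr 1
      refine meas_eq_of_null P hN ?_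
      intro ω hω
      simp only [Set.mem_iInter, Set.mem_setOf_eq]
      constructor <;> intro h j hj <;>
        have hjn : j ∈ Finset.Icc 1 n := by
          simp only [Finset.mem_Icc] at hj ⊢; omega
      · have := h j hj
        simpa only [if_pos (hout ω hω j hjn)] using this
      · have := h j hj
        simpa only [if_pos (hout ω hω j hjn)] using this
  · rintro ⟨Ω, inst, P, hP, X, Y, hX, hY, hXr, hYr, he, ho, hr⟩
    have hle : ∀ j ω, Y j ω ≤ m := fun j ω => (Finset.mem_Icc.mp (hYr j ω)).2
    refine ⟨Ω, inst, P, hP, X, Y, hX, hY, hXr, ?_, he, ho, ?_, ?_, hr⟩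
    · intro j ω
      have := hYr j ω
      simp only [Finset.mem_Icc] at this ⊢
      omega
    · intro j hj l hl
      have : {ω | Y j ω = l} = ∅ := by
        ext ω
        simp only [Set.mem_setOf_eq, Set.mem_empty_iff_false, iff_false]
        have := hle j ω
        simp only [Finset.mem_Icc] at hl
        omega
      simp [this]
    · intro j hj l hl
      have : {ω | X ω = j ∧ Y (X ω) ω = l} = ∅ := by
        ext ω
        simp only [Set.mem_setOf_eq, Set.mem_empty_iff_false, iff_false]
        have := hle (X ω) ω
        simp only [Finset.mem_Icc] at hl
        omega
      simp [this]
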